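/- For the FBDF2 weights with 0 < α < 1, the coefficients sum to zero: Σₖ₌₀^∞ ωₖ = 0, and every partial sum Σₖ₌₀^m ωₖ with m > 3 is strictly positive. -/
import Mathlib

open Filter

set_option maxHeartbeats 2000000 in
/-- For the FBDF2 weights with `0 < α < 1`: `Σₖ ωₖ = 0` and every partial sum
`Σₖ₌₀^m ωₖ` with `m > 3` is strictly positive. -/
theorem stmt_5 (α : ℝ) (hα : 0 < α) (hα1 : α < 1) (ω : ℕ → ℝ)
    (hω0 : ω 0 = 1) (hω1 : ω 1 = -(4/3) * α)
    (hrec : ∀ k : ℕ, 2 ≤ k →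
      ω k = (4/3) * (1 - (α + 1)/(k : ℝ)) * ω (k - 1)
          + (1/3) * (2*(1 + α)/(k : ℝ) - 1) * ω (k - 2)) :
    (∑' k : ℕ, ω k) = 0 ∧
      ∀ m : ℕ, 3 < m → 0 < ∑ k ∈ Finset.range (m + 1), ω k := by
  -- explicit low-order coefficients
  have hω2 : ω 2 = -(5/9)*α + (8/9)*α^2 := by
    have h := hrec 2 (by norm_num); norm_num at h; rw [h, hω0, hω1]; ring
  have hω3 : ω 3 = -(28/81)*α + (20/27)*α^2 - (32/81)*α^3 := by
    have h := hrec 3 (by norm_num); norm_num at h; rw [h, hω2, hω1]; ring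
  have hω4 : ω 4 = -(41/162)*α + (299/486)*α^2 - (40/81)*α^3 + (32/243)*α^4 := by
    have h := hrec 4 (by norm_num); norm_num at h; rw [h, hω3, hω2]; ring
  set S : ℕ → ℝ := fun m => ∑ k ∈ Finset.range (m + 1), ω k with hSdef
  clear_value S
  have hSsucc : ∀ m : ℕ, S (m+1) = S m + ω (m+1) := by
    intro m; simp [hSdef, Finset.sum_range_succ]
  have hS0 : S 0 = 1 := by simp [hSdef, hω0]
  have hS1 : S 1 = 1 - (4/3)*α := by rw [hSsucc 0, hS0, hω1]; ring
  have hS2 : S 2 = 1 - (17/9)*α + (8/9)*α^2 := by rw [hSsucc 1, hS1, hω2]; ring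
  have hS3 : S 3 = 1 - (181/81)*α + (44/27)*α^2 - (32/81)*α^3 := by
    rw [hSsucc 2, hS2, hω3]; ring
  have hS4 : S 4 = 1 - (403/162)*α + (1091/486)*α^2 - (8/9)*α^3 + (32/243)*α^4 := by
    rw [hSsucc 3, hS3, hω4]; ring
  -- base positivity facts
  have h1α : 0 < 1 - α := by linarith
  have hS3pos : 0 < S 3 := by
    rw [hS3]; nlinarith [mul_pos h1α h1α, mul_pos (mul_pos h1α h1α) h1α, mul_pos hα h1α]
  have hR4 : (4 - 2*α) * S 3 ≤ 4 * S 4 := by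
    rw [hS3, hS4]
    nlinarith [mul_pos hα h1α, mul_pos (mul_pos hα h1α) h1α,
      mul_pos (mul_pos (mul_pos hα h1α) h1α) h1α, sq_nonneg α, sq_nonneg (1-α)]
  have hQ4 : 8 * S 4 ≤ (8 - α) * S 3 := by
    rw [hS3, hS4]
    nlinarith [mul_pos hα h1α, mul_pos (mul_pos hα h1α) h1α,
      mul_pos (mul_pos (mul_pos hα h1α) h1α) h1α, sq_nonneg α, sq_nonneg (1-α)]
  -- cleared-denominator recurrence
  have hrec' : ∀ n : ℕ, 3*((n:ℝ)+3)*ω (n+3)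
      = 4*((n:ℝ)+2-α)*ω (n+2) + (2*α-1-(n:ℝ))*ω (n+1) := by
    intro n
    have h3 := hrec (n+3) (by omega)
    rw [show n+3-1 = n+2 from rfl, show n+3-2 = n+1 from rfl] at h3
    have hne : ((n:ℝ)+3) ≠ 0 := by positivity
    rw [h3]; push_cast; field_simp; ring
  -- telescoping identity
  have hI : ∀ n : ℕ, 3*((n:ℝ)+2)*ω (n+2) - ((n:ℝ)+1)*ω (n+1)
      + 4*α*S (n+1) - 2*α*S n = 0 := by
    intro n
    induction n with
    | zero =>
      norm_num
      rw [hω2, hω1, hS1, hS0]; ring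
    | succ n ih =>
      have h3 := hrec' n
      push_cast
      push_cast at ih
      linear_combination ih + h3 + 4*α*(hSsucc (n+1)) - 2*α*(hSsucc n)
  -- recurrence for the partial sums
  have hSR : ∀ n : ℕ, 3*((n:ℝ)+2)*S (n+2)
      = (4*((n:ℝ)+2)-1-4*α)*S (n+1) + (2*α+1-((n:ℝ)+2))*S n := by
    intro n
    linear_combination hI n + 3*((n:ℝ)+2)*hSsucc (n+1) - ((n:ℝ)+1)*hSsucc n
  -- the key two-sided invariant
  have hJ : ∀ n : ℕ, 0 < S (n+3) ∧ ((n:ℝ)+4-2*α)*S (n+3) ≤ ((n:ℝ)+4)*S (n+4)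
      ∧ 2*((n:ℝ)+4)*S (n+4) ≤ (2*((n:ℝ)+4)-α)*S (n+3) := by
    intro n
    induction n with
    | zero =>
      refine ⟨hS3pos, ?_, ?_⟩
      · norm_num
        linarith
      · norm_num
        linarith
    | succ n ih =>
      obtain ⟨P3, Rl, Qu⟩ := ih
      have hx4 : (0:ℝ) < (n:ℝ)+4 := by positivity
      have hx42 : (0:ℝ) < (n:ℝ)+4-2*α := by linarith
      have P4 : 0 < S (n+4) := by nlinarith [mul_pos hx42 P3]
      have SR5 := hSR (n+3)
      rw [show n+3+2 = n+5 from by omega] at SR5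
      push_cast at SR5
      have lower : ((n:ℝ)+5-2*α)*S (n+4) ≤ ((n:ℝ)+5)*S (n+5) := by
        nlinarith [SR5, Rl, mul_nonneg hα.le P4.le]
      have e1 : (0:ℝ) ≤ (2*(n:ℝ)+8-5*α)*((2*(n:ℝ)+8-α)*S (n+3) - 2*((n:ℝ)+4)*S (n+4)) := by
        apply mul_nonneg (by linarith) (by linarith)
      have e2 : (0:ℝ) ≤ (α*(4*(n:ℝ)+16-5*α))*S (n+3) := by
        apply mul_nonneg (by nlinarith) P3.le
      have hx8 : (0:ℝ) < 2*(n:ℝ)+8 := by positivity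
      have key : (0:ℝ) ≤ 2*((n:ℝ)+4-2*α)*S (n+3) - (2*(n:ℝ)+8-5*α)*S (n+4) := by
        nlinarith [e1, e2, hx8]
      have upper : 2*((n:ℝ)+5)*S (n+5) ≤ (2*((n:ℝ)+5)-α)*S (n+4) := by
        nlinarith [SR5, key]
      have hgoal3 : (0:ℝ) < S (n+1+3) := by
        rw [show n+1+3 = n+4 from by omega]; exact P4
      refine ⟨hgoal3, ?_, ?_⟩
      · push_cast
        rw [show n+1+3 = n+4 from by omega, show n+1+4 = n+5 from by omega]
        linarith [lower, upper]
      · push_cast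
        rw [show n+1+3 = n+4 from by omega, show n+1+4 = n+5 from by omega]
        linarith [lower, upper]
  have hpos4 : ∀ n : ℕ, 0 < S (n+4) := by
    intro n; have := (hJ (n+1)).1; rwa [show n+1+3 = n+4 from by omega] at this
  -- positivity of all partial sums with m > 3
  have hpart2 : ∀ m : ℕ, 3 < m → 0 < ∑ k ∈ Finset.range (m + 1), ω k := by
    intro m hm
    have h4 : m - 4 + 4 = m := by omega
    have := hpos4 (m - 4)
    rw [h4] at this
    simpa [hSdef] using this
  refine ⟨?_, hpart2⟩
  -- one-step exponential decay
  have hstep : ∀ n : ℕ, S (n+5) ≤ Real.exp (-(α/2) * (1/((n:ℝ)+5))) * S (n+4) := by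
    intro n
    have hUB0 := (hJ (n+1)).2.2
    push_cast at hUB0
    rw [show n+1+3 = n+4 from by omega, show n+1+4 = n+5 from by omega] at hUB0
    have hUB : 2*((n:ℝ)+5)*S (n+5) ≤ (2*((n:ℝ)+5)-α)*S (n+4) := by linarith
    have hx : (0:ℝ) < 2*((n:ℝ)+5) := by positivity
    have hne : ((n:ℝ)+5) ≠ 0 := by positivity
    have e := Real.add_one_le_exp (-(α/2) * (1/((n:ℝ)+5)))
    have emul := mul_le_mul_of_nonneg_right e (hpos4 n).le
    have e2 := mul_le_mul_of_nonneg_left emul hx.le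
    have hsc : 2*((n:ℝ)+5)*(-(α/2) * (1/((n:ℝ)+5))+1) = 2*((n:ℝ)+5)-α := by
      field_simp; ring
    have idt : 2*((n:ℝ)+5)*((-(α/2) * (1/((n:ℝ)+5))+1)*S (n+4))
        = (2*((n:ℝ)+5)-α)*S (n+4) := by rw [← hsc]; ring
    rw [idt] at e2
    have h3 := le_trans hUB e2
    nlinarith [h3, hx]
  -- accumulated decay
  have hacc : ∀ n : ℕ, S (n+4) ≤ S 4 * Real.exp (-(α/2) * ∑ j ∈ Finset.range n, (1/((j:ℝ)+5))) := by
    intro n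
    induction n with
    | zero => simp
    | succ n ih =>
      have h1 := hstep n
      have h2 : Real.exp (-(α/2) * (1/((n:ℝ)+5))) * S (n+4)
          ≤ Real.exp (-(α/2) * (1/((n:ℝ)+5))) * (S 4 * Real.exp (-(α/2) * ∑ j ∈ Finset.range n, (1/((j:ℝ)+5)))) :=
        mul_le_mul_of_nonneg_left ih (Real.exp_nonneg _)
      have h3 : Real.exp (-(α/2) * (1/((n:ℝ)+5))) * (S 4 * Real.exp (-(α/2) * ∑ j ∈ Finset.range n, (1/((j:ℝ)+5))))
          = S 4 * Real.exp (-(α/2) * ∑ j ∈ Finset.range (n+1), (1/((j:ℝ)+5))) := by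
        rw [Finset.sum_range_succ, mul_add, Real.exp_add]
        push_cast; ring
      rw [show n+1+4 = n+5 from by omega]
      calc S (n+5) ≤ _ := h1
        _ ≤ _ := h2
        _ = _ := h3
  -- the harmonic-type sum tends to infinity
  have hharm : Tendsto (fun n => ∑ j ∈ Finset.range n, (1/((j:ℝ)+5))) atTop atTop := by
    have h0 := Real.tendsto_sum_range_one_div_nat_succ_atTop
    have hshift : ∀ n : ℕ, ∑ j ∈ Finset.range n, (1/((j:ℝ)+5))
        = (∑ i ∈ Finset.range (n+4), 1/((i:ℝ)+1)) - ∑ i ∈ Finset.range 4, 1/((i:ℝ)+1) := by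
      intro n
      rw [show n+4 = 4+n from by omega, Finset.sum_range_add]
      simp only [add_sub_cancel_left]
      apply Finset.sum_congr rfl
      intro j _; push_cast; ring_nf
    simp only [hshift]
    apply Filter.tendsto_atTop_add_const_right
    exact (tendsto_add_atTop_iff_nat 4).mpr h0 |>.comp (tendsto_id)
  -- S (n+4) tends to 0
  have hexp : Tendsto (fun n : ℕ => S 4 * Real.exp (-(α/2) * ∑ j ∈ Finset.range n, (1/((j:ℝ)+5)))) atTop (nhds 0) := by
    rw [show (0:ℝ) = S 4 * 0 from by ring]
    apply Tendsto.const_mul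
    apply Real.tendsto_exp_atBot.comp
    apply Tendsto.const_mul_atTop_of_neg (by linarith : -(α/2) < 0) hharm
  have htendS4 : Tendsto (fun n : ℕ => S (n+4)) atTop (nhds 0) := by
    apply tendsto_of_tendsto_of_tendsto_of_le_of_le tendsto_const_nhds hexp
    · intro n; exact (hpos4 n).le
    · intro n; exact hacc n
  have htendS : Tendsto S atTop (nhds 0) := (tendsto_add_atTop_iff_nat 4).mp htendS4
  have htendP : Tendsto (fun n : ℕ => ∑ k ∈ Finset.range n, ω k) atTop (nhds 0) := by
    rw [← tendsto_add_atTop_iff_nat 1]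
    exact hSdef ▸ htendS
  -- summability
  have hωneg : ∀ n : ℕ, ω (n+5) ≤ 0 := by
    intro n
    have hUB0 := (hJ (n+1)).2.2
    push_cast at hUB0
    rw [show n+1+3 = n+4 from by omega, show n+1+4 = n+5 from by omega] at hUB0
    have h5 : S (n+5) ≤ S (n+4) := by nlinarith [mul_nonneg hα.le (hpos4 n).le]
    have := hSsucc (n+4)
    rw [show n+4+1 = n+5 from by omega] at this
    linarith
  have hps : ∀ n : ℕ, ∑ j ∈ Finset.range n, -ω (j+5) = S 4 - S (n+4) := by
    intro n
    induction n with
    | zero => simp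
    | succ n ih =>
      rw [Finset.sum_range_succ, ih, show n+1+4 = n+5 from by omega]
      have := hSsucc (n+4)
      rw [show n+4+1 = n+5 from by omega] at this
      linarith
  have hsummable : Summable (fun j : ℕ => -ω (j+5)) := by
    apply summable_of_sum_range_le (c := S 4)
    · intro n; linarith [hωneg n]
    · intro n; rw [hps n]; linarith [hpos4 n]
  have hsummable2 : Summable ω := by
    have h1 : Summable (fun j : ℕ => ω (j+5)) := by
      have := hsummable.neg; simpa using this
    exact (summable_nat_add_iff 5).mp h1
  have := hsummable2.hasSum.tendsto_sum_nat
  exact tendsto_nhds_unique this htendP
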